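/- Subset GNSA convergence: if X and Y are point clouds of size N with a one-to-one correspondence, and a random subset of indices S of [N] is chosen by including each index independently with probability s/N, while the normalization constants D_X and D_Y are fixed to those of the full clouds, then the expectation over S of (1/s^2) * sum_{i,j in S} |d(x_i,x_j)/D_X - d(y_i,y_j)/D_Y| equals GNSA(X,Y). -/

import Mathlib

open Finset

/-- Global Normalized Space Alignment between two indexed point clouds of the same
size, possibly lying in different-dimensional Euclidean spaces. -/
noncomputable def GNSA {N n m : ℕ} (X : Fin N → EuclideanSpace ℝ (Fin n))
    (Y : Fin N → EuclideanSpace ℝ (Fin m)) : ℝ :=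
  (1 / (N : ℝ) ^ 2) * ∑ i : Fin N, ∑ j : Fin N,
    |dist (X i) (X j) / (⨆ k, ‖X k‖) - dist (Y i) (Y j) / (⨆ k, ‖Y k‖)|

open MeasureTheory ENNReal in
lemma bern_integral (p : ℝ≥0∞) (hp : p ≤ 1) :
    ∫ b : Bool, (if b then (1:ℝ) else 0) ∂(PMF.bernoulli p.toNNReal (by simpa using ENNReal.toNNReal_mono ENNReal.one_ne_top hp)).toMeasure = p.toReal := by
  rw [integral_fintype .of_finite]
  simp [Measure.real, PMF.bernoulli_apply, PMF.toMeasure_apply_singleton _ _ (measurableSet_singleton _)]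
  exact (congrArg ENNReal.toReal (PMF.bernoulli_apply _ true)).trans (by simp [ENNReal.coe_toNNReal_eq_toReal])

open MeasureTheory ENNReal in
lemma pair_integral {N : ℕ} (p : ℝ≥0∞) (hp : p ≤ 1) {i j : Fin N} (hij : i ≠ j) :
    ∫ ω : Fin N → Bool, (if ω i then (1:ℝ) else 0) * (if ω j then 1 else 0)
      ∂(Measure.pi fun _ => (PMF.bernoulli p.toNNReal (by simpa using ENNReal.toNNReal_mono ENNReal.one_ne_top hp)).toMeasure) = p.toReal ^ 2 := by
  letI : MeasureSpace Bool := ⟨(PMF.bernoulli p.toNNReal (by simpa using ENNReal.toNNReal_mono ENNReal.one_ne_top hp)).toMeasure⟩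
  have hprob : IsProbabilityMeasure (volume : Measure Bool) :=
    PMF.toMeasure.isProbabilityMeasure _
  set f : Fin N → Bool → ℝ := fun k b => if k = i ∨ k = j then (if b then (1:ℝ) else 0) else 1
    with hf
  have key : ∀ ω : Fin N → Bool,
      (if ω i then (1:ℝ) else 0) * (if ω j then 1 else 0) = ∏ k, f k (ω k) := by
    intro ω
    rw [← Finset.prod_mul_prod_compl {i, j}]
    have h1 : ∏ k ∈ ({i, j} : Finset (Fin N)), f k (ω k)
        = (if ω i then (1:ℝ) else 0) * (if ω j then 1 else 0) := by
      rw [Finset.prod_pair hij]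
      simp [hf]
    have h2 : ∏ k ∈ ({i, j} : Finset (Fin N))ᶜ, f k (ω k) = 1 := by
      apply Finset.prod_eq_one
      intro k hk
      simp only [Finset.mem_compl, Finset.mem_insert, Finset.mem_singleton, not_or] at hk
      simp [hf, hk.1, hk.2]
    rw [h1, h2, mul_one]
  have := MeasureTheory.integral_fintype_prod_eq_prod (𝕜 := ℝ) f (μ := fun _ => volume)
  simp only [← key] at this
  rw [show (Measure.pi fun _ : Fin N => (PMF.bernoulli p.toNNReal (by simpa using ENNReal.toNNReal_mono ENNReal.one_ne_top hp)).toMeasure)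
      = (volume : Measure (Fin N → Bool)) from rfl, MeasureTheory.volume_pi, this]
  have hfk : ∀ k : Fin N, ∫ b : Bool, f k b
      = if k = i ∨ k = j then p.toReal else 1 := by
    intro k
    by_cases h : k = i ∨ k = j
    · simp only [hf, h, if_true]
      exact bern_integral p hp
    · simp only [hf, h, if_false]
      rw [integral_const, smul_eq_mul, probReal_univ, mul_one]
  simp only [hfk]
  rw [Finset.prod_ite, Finset.prod_const, Finset.prod_const, one_pow, mul_one]
  congr 1
  have : Finset.univ.filter (fun k : Fin N => k = i ∨ k = j) = {i, j} := by
    ext k; simp [or_comm]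
  rw [this, Finset.card_pair hij]

open MeasureTheory ENNReal in
/-- Subset GNSA convergence: choosing each index independently with probability
s/N (and keeping the full-cloud normalization constants), the expectation of the
minibatch GNSA estimator equals the full GNSA. -/
theorem gnsa_subset_expectation {N n m : ℕ} (X : Fin N → EuclideanSpace ℝ (Fin n))
    (Y : Fin N → EuclideanSpace ℝ (Fin m))
    (hX : 0 < (⨆ k, ‖X k‖)) (hY : 0 < (⨆ k, ‖Y k‖))
    (s : ℕ) (hs : 0 < s) (hsN : s ≤ N)
    (p : ℝ≥0∞) (hp : p ≤ 1) (hps : p = (s : ℝ≥0∞) / (N : ℝ≥0∞)) :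
    ∫ ω : Fin N → Bool,
        ((1 / (s : ℝ) ^ 2) * ∑ i : Fin N, ∑ j : Fin N,
          |dist (X i) (X j) / (⨆ k, ‖X k‖) - dist (Y i) (Y j) / (⨆ k, ‖Y k‖)| *
            (if ω i then (1 : ℝ) else 0) * (if ω j then (1 : ℝ) else 0))
        ∂(Measure.pi fun _ : Fin N => (PMF.bernoulli p.toNNReal (by simpa using ENNReal.toNNReal_mono ENNReal.one_ne_top hp)).toMeasure)
      = GNSA X Y := by
  have hN : 0 < N := lt_of_lt_of_le hs hsN
  set μ := Measure.pi fun _ : Fin N => (PMF.bernoulli p.toNNReal (by simpa using ENNReal.toNNReal_mono ENNReal.one_ne_top hp)).toMeasure with hμ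
  have hprob : ∀ k : Fin N, IsProbabilityMeasure ((PMF.bernoulli p.toNNReal (by simpa using ENNReal.toNNReal_mono ENNReal.one_ne_top hp)).toMeasure) :=
    fun _ => PMF.toMeasure.isProbabilityMeasure _
  have : IsProbabilityMeasure μ := by rw [hμ]; infer_instance
  set c : Fin N → Fin N → ℝ := fun i j =>
    |dist (X i) (X j) / (⨆ k, ‖X k‖) - dist (Y i) (Y j) / (⨆ k, ‖Y k‖)| with hc
  rw [MeasureTheory.integral_const_mul]
  rw [MeasureTheory.integral_finset_sum _ (fun i _ => .of_finite)]
  have step : ∀ i : Fin N, ∫ ω : Fin N → Bool,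
      (∑ j : Fin N, c i j * (if ω i then (1:ℝ) else 0) * (if ω j then 1 else 0)) ∂μ
      = ∑ j : Fin N, p.toReal ^ 2 * c i j := by
    intro i
    rw [MeasureTheory.integral_finset_sum _ (fun j _ => .of_finite)]
    refine Finset.sum_congr rfl fun j _ => ?_
    by_cases hij : i = j
    · subst hij
      have : c i i = 0 := by simp [hc]
      simp [this]
    · simp_rw [mul_assoc, MeasureTheory.integral_const_mul]
      rw [pair_integral p hp hij]
      ring
  simp only [hc] at step
  simp_rw [step]
  rw [GNSA]
  simp_rw [← Finset.mul_sum]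
  have hptr : p.toReal = (s : ℝ) / (N : ℝ) := by
    rw [hps, ENNReal.toReal_div]
    simp
  rw [hptr]
  rw [← mul_assoc]
  congr 1
  field_simp
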